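/- If C ⊂ ℝ is compact and uniformly perfect with constant K > 1, then its thickness satisfies τ(C) ≥ 1/K. -/

import Mathlib

open MeasureTheory Filter Set Metric

/-- A ⊆ ℝ is uniformly perfect with constant K: whenever x ∈ A, r > 0 and
A ⊄ B(x,Kr), then A ∩ (B(x,Kr) \ B(x,r)) ≠ ∅. -/
def UnifPerfSet (A : Set ℝ) (K : ℝ) : Prop :=
  ∀ x ∈ A, ∀ r > 0, ¬ A ⊆ ball x (K * r) → (A ∩ (ball x (K * r) \ ball x r)).Nonempty

/-- `HasGapIn C a b`: the compact set C has a (nonempty bounded) complementary gap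
contained in the interval [a,b], i.e. a bounded connected component (u,v) of ℝ \ C
with a ≤ u < v ≤ b. -/
def HasGapIn (C : Set ℝ) (a b : ℝ) : Prop :=
  ∃ u v : ℝ, a ≤ u ∧ u < v ∧ v ≤ b ∧ u ∈ C ∧ v ∈ C ∧ Ioo u v ∩ C = ∅

/-- A derivation of a compact set C ⊆ ℝ: to each finite binary word w it assigns a bridge
[a w, b w] and a (possibly empty) gap (c w, d w), starting from the smallest closed
interval containing C. If the bridge contains a gap of C it splits along a chosen gap of
C; otherwise it is divided into two halves. The children bridges are
[a w, c w] and [d w, b w]. -/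
structure CantorDerivation (C : Set ℝ) where
  a : List Bool → ℝ
  b : List Bool → ℝ
  c : List Bool → ℝ
  d : List Bool → ℝ
  root_a : a [] = sInf C
  root_b : b [] = sSup C
  le_ac : ∀ w, a w ≤ c w
  le_cd : ∀ w, c w ≤ d w
  le_db : ∀ w, d w ≤ b w
  gap : ∀ w, c w < d w → c w ∈ C ∧ d w ∈ C ∧ Ioo (c w) (d w) ∩ C = ∅
  split : ∀ w, HasGapIn C (a w) (b w) → c w < d w
  nosplit : ∀ w, ¬ HasGapIn C (a w) (b w) → c w = d w ∧ c w = (a w + b w) / 2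
  child0_a : ∀ w, a (w ++ [false]) = a w
  child0_b : ∀ w, b (w ++ [false]) = c w
  child1_a : ∀ w, a (w ++ [true]) = d w
  child1_b : ∀ w, b (w ++ [true]) = b w

/-- The thickness τ_𝒟 of a derivation: the infimum over splitting bridges of
min(diam I_{w0}, diam I_{w1})/diam O_w (and ∞ if no bridge splits). -/
noncomputable def derThickness {C : Set ℝ} (D : CantorDerivation C) : ENNReal :=
  ⨅ (w : {w : List Bool // D.c w < D.d w}),
    ENNReal.ofReal (min (D.c w.1 - D.a w.1) (D.b w.1 - D.d w.1) / (D.d w.1 - D.c w.1))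

/-- The thickness τ(C) of a compact set C ⊆ ℝ: the supremum of τ_𝒟 over all
derivations 𝒟 of C. -/
noncomputable def thickness (C : Set ℝ) : ENNReal :=
  ⨆ D : CantorDerivation C, derThickness D

namespace UPT

lemma gap_empty_iff {C : Set ℝ} {u v : ℝ} :
    Ioo u v ∩ C = ∅ ↔ ∀ x ∈ C, x ≤ u ∨ v ≤ x := by
  rw [Set.eq_empty_iff_forall_notMem]
  constructor
  · intro h x hx
    by_contra hc
    push_neg at hc
    exact h x ⟨⟨hc.1, hc.2⟩, hx⟩
  · rintro h x ⟨⟨h1, h2⟩, hx⟩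
    rcases h x hx with h3 | h3
    · exact absurd h1 (not_lt.mpr h3)
    · exact absurd h2 (not_lt.mpr h3)

def IsMaxGap (C : Set ℝ) (a b u v : ℝ) : Prop :=
  a ≤ u ∧ u < v ∧ v ≤ b ∧ u ∈ C ∧ v ∈ C ∧ Ioo u v ∩ C = ∅ ∧
    ∀ u' v', a ≤ u' → u' < v' → v' ≤ b → u' ∈ C → v' ∈ C → Ioo u' v' ∩ C = ∅ →
      v' - u' ≤ v - u

lemma exists_maxGap {C : Set ℝ} (hC : IsCompact C) {a b : ℝ} (h : HasGapIn C a b) :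
    ∃ p : ℝ × ℝ, IsMaxGap C a b p.1 p.2 := by
  obtain ⟨u, v, hau, huv, hvb, huC, hvC, hgap⟩ := h
  set T := C ∩ Icc a b with hT
  have hTc : IsCompact T := hC.inter_right isClosed_Icc
  set S : Set (ℝ × ℝ) :=
    (T ×ˢ T) ∩ ({p | p.1 ≤ p.2} ∩ ⋂ x ∈ C, {p : ℝ × ℝ | x ≤ p.1 ∨ p.2 ≤ x}) with hS
  have hScl : IsClosed ({p : ℝ × ℝ | p.1 ≤ p.2} ∩ ⋂ x ∈ C, {p : ℝ × ℝ | x ≤ p.1 ∨ p.2 ≤ x}) := by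
    refine (isClosed_le continuous_fst continuous_snd).inter ?_
    refine isClosed_biInter fun x _ => ?_
    exact (isClosed_le continuous_const continuous_fst).union
      (isClosed_le continuous_snd continuous_const)
  have hSc : IsCompact S := (hTc.prod hTc).inter_right hScl
  have memS : ∀ p : ℝ × ℝ, p ∈ S ↔
      (p.1 ∈ C ∧ a ≤ p.1 ∧ p.1 ≤ p.2 ∧ p.2 ≤ b ∧ p.2 ∈ C ∧ Ioo p.1 p.2 ∩ C = ∅) := by
    intro p
    rw [hS]
    simp only [Set.mem_inter_iff, Set.mem_prod, Set.mem_setOf_eq, Set.mem_iInter]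
    constructor
    · rintro ⟨⟨⟨h1, h2, h3⟩, ⟨h4, h5, h6⟩⟩, h7, h8⟩
      exact ⟨h1, h2, h7, h6, h4, gap_empty_iff.mpr fun x hx => h8 x hx⟩
    · rintro ⟨h1, h2, h3, h4, h5, h6⟩
      exact ⟨⟨⟨h1, h2, le_trans h3 h4⟩, ⟨h5, le_trans h2 h3, h4⟩⟩, h3,
        fun x hx => gap_empty_iff.mp h6 x hx⟩
  have hne : S.Nonempty := ⟨(u, v), (memS (u, v)).mpr ⟨huC, hau, huv.le, hvb, hvC, hgap⟩⟩
  obtain ⟨p, hpS, hmax⟩ := hSc.exists_isMaxOn hne ((continuous_snd.sub continuous_fst).continuousOn)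
  obtain ⟨hp1C, hp1a, hple, hp2b, hp2C, hpgap⟩ := (memS p).mp hpS
  have hmax' : ∀ u' v', a ≤ u' → u' < v' → v' ≤ b → u' ∈ C → v' ∈ C → Ioo u' v' ∩ C = ∅ →
      v' - u' ≤ p.2 - p.1 := by
    intro u' v' h1 h2 h3 h4 h5 h6
    exact hmax ((memS (u', v')).mpr ⟨h4, h1, h2.le, h3, h5, h6⟩)
  have hlt : p.1 < p.2 := by
    have := hmax' u v hau huv hvb huC hvC hgap
    linarith
  exact ⟨p, hp1a, hlt, hp2b, hp1C, hp2C, hpgap, hmax'⟩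


open Classical in
noncomputable def gapPair (C : Set ℝ) (a b : ℝ) : ℝ × ℝ :=
  if h : ∃ p : ℝ × ℝ, IsMaxGap C a b p.1 p.2 then h.choose
  else ((a + b) / 2, (a + b) / 2)

lemma gapPair_spec {C : Set ℝ} (hC : IsCompact C) (a b : ℝ) :
    IsMaxGap C a b (gapPair C a b).1 (gapPair C a b).2 ∨
      (¬ HasGapIn C a b ∧ gapPair C a b = ((a + b) / 2, (a + b) / 2)) := by
  unfold gapPair
  split_ifs with h
  · exact Or.inl h.choose_spec
  · exact Or.inr ⟨fun hg => h (exists_maxGap hC hg), rfl⟩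

noncomputable def bridge (C : Set ℝ) : List Bool → ℝ × ℝ
  | [] => (sInf C, sSup C)
  | (false :: w) => ((bridge C w).1, (gapPair C (bridge C w).1 (bridge C w).2).1)
  | (true :: w) => ((gapPair C (bridge C w).1 (bridge C w).2).2, (bridge C w).2)

lemma gapPair_bounds {C : Set ℝ} (hC : IsCompact C) {a b : ℝ} (hab : a ≤ b) :
    a ≤ (gapPair C a b).1 ∧ (gapPair C a b).1 ≤ (gapPair C a b).2 ∧ (gapPair C a b).2 ≤ b := by
  rcases gapPair_spec hC a b with hm | ⟨_, he⟩
  · exact ⟨hm.1, hm.2.1.le, hm.2.2.1⟩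
  · rw [he]; constructor <;> [skip; constructor] <;> simp <;> linarith

lemma bridge_le {C : Set ℝ} (hC : IsCompact C) : ∀ w, (bridge C w).1 ≤ (bridge C w).2 := by
  intro w
  induction w with
  | nil =>
    show sInf C ≤ sSup C
    rcases C.eq_empty_or_nonempty with rfl | hne
    · simp [Real.sInf_empty, Real.sSup_empty]
    · exact csInf_le_csSup hne hC.bddBelow hC.bddAbove
  | cons x w ih =>
    obtain ⟨h1, h2, h3⟩ := gapPair_bounds hC (C := C) ih
    cases x
    · exact h1
    · exact h3

/-- The protection invariant for a bridge [a,b]. -/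
def Prot (C : Set ℝ) (a b : ℝ) : Prop :=
  a ∈ C ∧ b ∈ C ∧ a ≤ b ∧
    ∀ u v : ℝ, u ∈ C → v ∈ C → a ≤ u → u < v → v ≤ b → Ioo u v ∩ C = ∅ →
      Ioo (a - (v - u)) a ∩ C = ∅ ∧ Ioo b (b + (v - u)) ∩ C = ∅

lemma no_gap_Icc_subset {C : Set ℝ} (hC : IsCompact C) {a b : ℝ} (ha : a ∈ C) (hb : b ∈ C)
    (h : ¬ HasGapIn C a b) : Icc a b ⊆ C := by
  intro x hx
  by_contra hxC
  have h1 : IsCompact (C ∩ Icc a x) := hC.inter_right isClosed_Icc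
  have h2 : IsCompact (C ∩ Icc x b) := hC.inter_right isClosed_Icc
  have hne1 : (C ∩ Icc a x).Nonempty := ⟨a, ha, le_rfl, hx.1⟩
  have hne2 : (C ∩ Icc x b).Nonempty := ⟨b, hb, hx.2, le_rfl⟩
  set u := sSup (C ∩ Icc a x) with hu
  set v := sInf (C ∩ Icc x b) with hv
  have huC : u ∈ C ∩ Icc a x := h1.sSup_mem hne1
  have hvC : v ∈ C ∩ Icc x b := h2.sInf_mem hne2
  have hux : u < x := lt_of_le_of_ne huC.2.2 (fun e => hxC (e ▸ huC.1))
  have hxv : x < v := lt_of_le_of_ne hvC.2.1 (fun e => hxC (e ▸ hvC.1))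
  apply h
  refine ⟨u, v, huC.2.1, hux.trans hxv, hvC.2.2, huC.1, hvC.1, ?_⟩
  rw [Set.eq_empty_iff_forall_notMem]
  rintro y ⟨⟨hy1, hy2⟩, hyC⟩
  rcases le_total y x with hyx | hxy
  · have : y ≤ u := le_csSup h1.bddAbove ⟨hyC, le_trans huC.2.1 hy1.le, hyx⟩
    linarith
  · have : v ≤ y := csInf_le h2.bddBelow ⟨hyC, hxy, le_trans hy2.le hvC.2.2⟩
    linarith

lemma prot_children {C : Set ℝ} (hC : IsCompact C) {a b : ℝ} (hp : Prot C a b) :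
    Prot C a (gapPair C a b).1 ∧ Prot C (gapPair C a b).2 b := by
  obtain ⟨haC, hbC, hab, hprot⟩ := hp
  rcases gapPair_spec hC a b with hm | ⟨hng, he⟩
  · obtain ⟨hau, huv, hvb, huC, hvC, hgap, hmax⟩ := hm
    set u := (gapPair C a b).1
    set v := (gapPair C a b).2
    constructor
    · refine ⟨haC, huC, hau, ?_⟩
      intro u' v' h1 h2 h3 h4 h5 h6
      have ht : v' - u' ≤ v - u := hmax u' v' h3 h4 (h5.trans (huv.le.trans hvb)) h1 h2 h6
      constructor
      · exact (hprot u' v' h1 h2 h3 h4 (le_trans h5 (le_trans huv.le hvb)) h6).1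
      · rw [Set.eq_empty_iff_forall_notMem]
        rintro y ⟨⟨hy1, hy2⟩, hyC⟩
        have : y ∈ Ioo u v ∩ C := ⟨⟨hy1, by linarith⟩, hyC⟩
        rw [hgap] at this
        exact this
    · refine ⟨hvC, hbC, hvb, ?_⟩
      intro u' v' h1 h2 h3 h4 h5 h6
      have ht : v' - u' ≤ v - u := hmax u' v' (le_trans hau (le_trans huv.le h3)) h4 h5 h1 h2 h6
      constructor
      · rw [Set.eq_empty_iff_forall_notMem]
        rintro y ⟨⟨hy1, hy2⟩, hyC⟩
        have : y ∈ Ioo u v ∩ C := ⟨⟨by linarith, hy2⟩, hyC⟩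
        rw [hgap] at this
        exact this
      · exact (hprot u' v' h1 h2 (le_trans hau (le_trans huv.le h3)) h4 h5 h6).2
  · have hsub : Icc a b ⊆ C := no_gap_Icc_subset hC haC hbC hng
    have hmem : (a + b) / 2 ∈ C := hsub ⟨by linarith, by linarith⟩
    rw [he]
    constructor
    · refine ⟨haC, hmem, by linarith, ?_⟩
      intro u' v' h1 h2 h3 h4 h5 h6
      exfalso
      have : (u' + v') / 2 ∈ Ioo u' v' ∩ C :=
        ⟨⟨by linarith, by linarith⟩, hsub ⟨by linarith, by linarith⟩⟩
      rw [h6] at this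
      exact this
    · refine ⟨hmem, hbC, by linarith, ?_⟩
      intro u' v' h1 h2 h3 h4 h5 h6
      exfalso
      have : (u' + v') / 2 ∈ Ioo u' v' ∩ C :=
        ⟨⟨by linarith, by linarith⟩, hsub ⟨by linarith, by linarith⟩⟩
      rw [h6] at this
      exact this

lemma bridge_prot {C : Set ℝ} (hC : IsCompact C) (hne : C.Nonempty) :
    ∀ w, Prot C (bridge C w).1 (bridge C w).2 := by
  intro w
  induction w with
  | nil =>
    refine ⟨hC.sInf_mem hne, hC.sSup_mem hne, csInf_le_csSup hne hC.bddBelow hC.bddAbove, ?_⟩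
    intro u v _ _ _ _ _ _
    constructor
    · rw [Set.eq_empty_iff_forall_notMem]
      rintro y ⟨⟨_, hy2⟩, hyC⟩
      exact absurd (csInf_le hC.bddBelow hyC) (not_le.mpr hy2)
    · rw [Set.eq_empty_iff_forall_notMem]
      rintro y ⟨⟨hy1, _⟩, hyC⟩
      exact absurd (le_csSup hC.bddAbove hyC) (not_le.mpr hy1)
  | cons x w ih =>
    cases x
    · exact (prot_children hC ih).1
    · exact (prot_children hC ih).2


lemma key {C : Set ℝ} {K : ℝ} (hK : 1 < K) (h : UnifPerfSet C K) {a b u v : ℝ}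
    (hp : Prot C a b) (hm : IsMaxGap C a b u v) :
    (v - u) / K ≤ u - a ∧ (v - u) / K ≤ b - v := by
  obtain ⟨haC, hbC, hab, hprot⟩ := hp
  obtain ⟨hau, huv, hvb, huC, hvC, hgap, _⟩ := hm
  have hK0 : (0 : ℝ) < K := lt_trans one_pos hK
  set g := v - u with hgdef
  have hg0 : 0 < g := by simp only [hgdef]; linarith
  have hKg : K * (g / K) = g := by field_simp
  obtain ⟨hl, hr⟩ := hprot u v huC hvC hau huv hvb hgap
  have hmem : ∀ y x : ℝ, y ∈ C → y ∈ ball x (K * (g / K)) \ ball x (g / K) →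
      (g / K ≤ |y - x| ∧ |y - x| < g) := by
    intro y x _ hy
    rw [hKg] at hy
    obtain ⟨hy1, hy2⟩ := hy
    rw [mem_ball, Real.dist_eq] at hy1
    rw [mem_ball, Real.dist_eq] at hy2
    exact ⟨not_lt.mp hy2, hy1⟩
  constructor
  · by_contra hcon
    push_neg at hcon
    have hnb : ¬ C ⊆ ball u (K * (g / K)) := by
      intro hs
      have := hs hvC
      rw [hKg, mem_ball, Real.dist_eq] at this
      rw [abs_of_pos hg0] at this
      · exact lt_irrefl g this
    obtain ⟨y, hyC, hyb⟩ := h u huC (g / K) (div_pos hg0 hK0) hnb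
    obtain ⟨h2, h1⟩ := hmem y u hyC hyb
    have hgK : 0 < g / K := div_pos hg0 hK0
    rcases lt_trichotomy y u with hyu | hyu | hyu
    · have habs : |y - u| = u - y := by rw [abs_of_neg (by linarith)]; ring
      rw [habs] at h1 h2
      rcases le_or_gt a y with hay | hay
      · linarith
      · have : y ∈ Ioo (a - g) a ∩ C := ⟨⟨by linarith, hay⟩, hyC⟩
        rw [show a - g = a - (v - u) from rfl] at this
        rw [hl] at this
        exact this
    · subst hyu
      simp only [sub_self, abs_zero] at h2
      linarith
    · have habs : |y - u| = y - u := by rw [abs_of_pos (by linarith)]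
      rw [habs] at h1 h2
      have : y ∈ Ioo u v ∩ C := ⟨⟨hyu, by linarith⟩, hyC⟩
      rw [hgap] at this
      exact this
  · by_contra hcon
    push_neg at hcon
    have hnb : ¬ C ⊆ ball v (K * (g / K)) := by
      intro hs
      have := hs huC
      rw [hKg, mem_ball, Real.dist_eq] at this
      rw [abs_of_neg (by linarith)] at this
      have : v - u < g := by linarith
      exact lt_irrefl g (by linarith [hgdef ▸ this])
    obtain ⟨y, hyC, hyb⟩ := h v hvC (g / K) (div_pos hg0 hK0) hnb
    obtain ⟨h2, h1⟩ := hmem y v hyC hyb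
    have hgK : 0 < g / K := div_pos hg0 hK0
    rcases lt_trichotomy y v with hyv | hyv | hyv
    · have habs : |y - v| = v - y := by rw [abs_of_neg (by linarith)]; ring
      rw [habs] at h1 h2
      have : y ∈ Ioo u v ∩ C := ⟨⟨by linarith, hyv⟩, hyC⟩
      rw [hgap] at this
      exact this
    · subst hyv
      simp only [sub_self, abs_zero] at h2
      linarith
    · have habs : |y - v| = y - v := by rw [abs_of_pos (by linarith)]
      rw [habs] at h1 h2
      rcases le_or_gt y b with hyb' | hyb'
      · linarith
      · have : y ∈ Ioo b (b + (v - u)) ∩ C := ⟨⟨hyb', by linarith⟩, hyC⟩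
        rw [hr] at this
        exact this




lemma rev_append (x : Bool) (w : List Bool) : (w ++ [x]).reverse = x :: w.reverse := by simp

noncomputable def myDer (C : Set ℝ) (hC : IsCompact C) : CantorDerivation C where
  a w := (bridge C w.reverse).1
  b w := (bridge C w.reverse).2
  c w := (gapPair C (bridge C w.reverse).1 (bridge C w.reverse).2).1
  d w := (gapPair C (bridge C w.reverse).1 (bridge C w.reverse).2).2
  root_a := rfl
  root_b := rfl
  le_ac w := (gapPair_bounds hC (bridge_le hC w.reverse)).1
  le_cd w := (gapPair_bounds hC (bridge_le hC w.reverse)).2.1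
  le_db w := (gapPair_bounds hC (bridge_le hC w.reverse)).2.2
  gap w := by
    intro hlt
    beta_reduce at hlt ⊢
    rcases gapPair_spec hC (bridge C w.reverse).1 (bridge C w.reverse).2 with hm | ⟨_, he⟩
    · exact ⟨hm.2.2.2.1, hm.2.2.2.2.1, hm.2.2.2.2.2.1⟩
    · rw [he] at hlt
      exact absurd hlt (lt_irrefl _)
  split w := by
    intro hg
    beta_reduce at hg ⊢
    rcases gapPair_spec hC (bridge C w.reverse).1 (bridge C w.reverse).2 with hm | ⟨hng, _⟩
    · exact hm.2.1
    · exact absurd hg hng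
  nosplit w := by
    intro hng
    beta_reduce at hng ⊢
    rcases gapPair_spec hC (bridge C w.reverse).1 (bridge C w.reverse).2 with hm | ⟨_, he⟩
    · exact absurd ⟨_, _, hm.1, hm.2.1, hm.2.2.1, hm.2.2.2.1, hm.2.2.2.2.1, hm.2.2.2.2.2.1⟩ hng
    · rw [he]
      exact ⟨rfl, rfl⟩
  child0_a w := by beta_reduce; rw [rev_append]; simp [bridge]
  child0_b w := by beta_reduce; rw [rev_append]; simp [bridge]
  child1_a w := by beta_reduce; rw [rev_append]; simp [bridge]
  child1_b w := by beta_reduce; rw [rev_append]; simp [bridge]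

end UPT

/-- Proposition 5.1(3): if C ⊆ ℝ is compact and uniformly perfect with
constant K > 1, then τ(C) ≥ 1/K. -/
theorem unif_perf_to_thickness (C : Set ℝ) (hC : IsCompact C) (K : ℝ) (hK : 1 < K)
    (h : UnifPerfSet C K) :
    ENNReal.ofReal (1 / K) ≤ thickness C := by
  refine le_trans ?_ (le_iSup (fun D => derThickness D) (UPT.myDer C hC))
  refine le_iInf ?_
  rintro ⟨w, hw⟩
  set p := UPT.bridge C w.reverse with hp
  set q := UPT.gapPair C p.1 p.2 with hq
  have hw' : q.1 < q.2 := hw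
  rcases UPT.gapPair_spec hC p.1 p.2 with hm | ⟨_, he⟩
  · have hne : C.Nonempty := ⟨q.1, hm.2.2.2.1⟩
    have hprot := UPT.bridge_prot hC hne w.reverse
    obtain ⟨k1, k2⟩ := UPT.key hK h hprot hm
    show ENNReal.ofReal (1 / K) ≤
      ENNReal.ofReal (min (q.1 - p.1) (p.2 - q.2) / (q.2 - q.1))
    apply ENNReal.ofReal_le_ofReal
    have hdc : 0 < q.2 - q.1 := by linarith [hm.2.1]
    rw [le_div_iff₀ hdc]
    have e : 1 / K * (q.2 - q.1) = (q.2 - q.1) / K := by ring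
    rw [e]
    exact le_min k1 k2
  · rw [hq, he] at hw'
    simp at hw'
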